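/- Let D ⊆ ℂ be a simply connected open set and Φ = (φ₁, φ₂, φ₃, φ₄) : D → ℂ⁴ be holomorphic with φ₁² + φ₂² + φ₃² + φ₄² = 0 on D and φ₁² + φ₂² nonvanishing on D. Then there exist holomorphic functions f, h₁, h₂ : D → ℂ with f nonvanishing such that φ₁ = f·cos h₁, φ₂ = f·sin h₁, φ₃ = i·f·cos h₂ and φ₄ = i·f·sin h₂ on D. -/

import Mathlib

open Complex
open Set


-- clamp helper
noncomputable def cl (x : ℝ) : ℝ := max 0 (min 1 x)

lemma cl_mem (x : ℝ) : cl x ∈ Icc (0:ℝ) 1 :=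
  ⟨le_max_left _ _, max_le (by norm_num) (min_le_left _ _)⟩

lemma cl_of_mem {x : ℝ} (hx : x ∈ Icc (0:ℝ) 1) : cl x = x := by
  rcases hx with ⟨h0, h1⟩
  simp [cl, min_eq_right h1, max_eq_right h0]

lemma cl_cont : Continuous cl := continuous_const.max (continuous_const.min continuous_id)

-- integer-valued continuous on Icc is constant at endpoints
lemma intval {φ : ℝ → ℝ} (hφ : ContinuousOn φ (Icc 0 1))
    (hint : ∀ t ∈ Icc (0:ℝ) 1, ∃ m : ℤ, φ t = m) : φ 1 = φ 0 := by
  by_contra hne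
  obtain ⟨m0, hm0⟩ := hint 0 ⟨le_refl _, zero_le_one⟩
  obtain ⟨m1, hm1⟩ := hint 1 ⟨zero_le_one, le_refl _⟩
  have hmm : m0 ≠ m1 := by rintro rfl; exact hne (hm1.trans hm0.symm)
  rcases lt_or_gt_of_ne hmm with h | h
  · have h05 : φ 0 < m0 + 1/2 := by rw [hm0]; linarith
    have h15 : (m0:ℝ) + 1/2 ≤ φ 1 := by
      rw [hm1]
      have : (m0:ℝ) + 1 ≤ m1 := by exact_mod_cast h
      linarith
    obtain ⟨t, ht, hφt⟩ := intermediate_value_Icc zero_le_one hφ ⟨h05.le, h15⟩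
    obtain ⟨m, hm⟩ := hint t ht
    rw [hm] at hφt
    have : (2*m : ℝ) = 2*m0 + 1 := by linarith
    have : (2*m : ℤ) = 2*m0 + 1 := by exact_mod_cast this
    omega
  · have h05 : φ 1 < m1 + 1/2 := by rw [hm1]; linarith
    have h15 : (m1:ℝ) + 1/2 ≤ φ 0 := by
      rw [hm0]
      have : (m1:ℝ) + 1 ≤ m0 := by exact_mod_cast h
      linarith
    obtain ⟨t, ht, hφt⟩ := intermediate_value_Icc' zero_le_one hφ ⟨h05.le, h15⟩
    obtain ⟨m, hm⟩ := hint t ht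
    rw [hm] at hφt
    have : (2*m : ℝ) = 2*m1 + 1 := by linarith
    have : (2*m : ℤ) = 2*m1 + 1 := by exact_mod_cast this
    omega

-- uniqueness of lifts at endpoints
lemma lift_unique {u v : ℝ → ℂ} (hu : ContinuousOn u (Icc 0 1)) (hv : ContinuousOn v (Icc 0 1))
    (h : ∀ t ∈ Icc (0:ℝ) 1, Complex.exp (u t) = Complex.exp (v t)) (h0 : u 0 = v 0) :
    u 1 = v 1 := by
  set φ : ℝ → ℝ := fun t => (u t - v t).im / (2 * Real.pi) with hφdef
  have hint : ∀ t ∈ Icc (0:ℝ) 1, ∃ m : ℤ, φ t = m := by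
    intro t ht
    have : Complex.exp (u t - v t) = 1 := by
      rw [Complex.exp_sub, h t ht, div_self (Complex.exp_ne_zero _)]
    obtain ⟨n, hn⟩ := Complex.exp_eq_one_iff.mp this
    refine ⟨n, ?_⟩
    have him : (u t - v t).im = n * (2 * Real.pi) := by
      rw [hn]; simp [Complex.mul_im, Complex.mul_re]
    rw [hφdef]
    simp only [him]
    field_simp
  have hφcont : ContinuousOn φ (Icc 0 1) :=
    (Complex.continuous_im.comp_continuousOn (hu.sub hv)).div_const _
  have h10 := intval hφcont hint
  have hφ0 : φ 0 = 0 := by simp [hφdef, h0]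
  have him1 : (u 1 - v 1).im = 0 := by
    have := h10.trans hφ0
    have hπ : (2 * Real.pi) ≠ 0 := by positivity
    have := (div_eq_zero_iff.mp this).resolve_right hπ
    exact this
  have hone : Complex.exp (u 1 - v 1) = 1 := by
    rw [Complex.exp_sub, h 1 ⟨zero_le_one, le_refl _⟩, div_self (Complex.exp_ne_zero _)]
  obtain ⟨n, hn⟩ := Complex.exp_eq_one_iff.mp hone
  have : (n:ℝ) * (2 * Real.pi) = 0 := by
    rw [hn] at him1
    simpa [Complex.mul_im] using him1
  have hn0 : (n:ℝ) = 0 := by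
    have hπ : (2 * Real.pi) ≠ 0 := by positivity
    exact (mul_eq_zero.mp this).resolve_right hπ
  have hnz : n = 0 := by exact_mod_cast hn0
  have : u 1 - v 1 = 0 := by rw [hn, hnz]; simp
  exact sub_eq_zero.mp this

-- telescoping product
lemma prod_tel (f : ℕ → ℂ) (n : ℕ) (hf : ∀ k, k ≤ n → f k ≠ 0) :
    (∏ k ∈ Finset.range n, f (k+1) / f k) = f n / f 0 := by
  induction n with
  | zero => simp [div_self (hf 0 le_rfl)]
  | succ n ih =>
    have h0 := hf 0 (Nat.zero_le _)
    have hn := hf n (Nat.le_succ n)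
    rw [Finset.prod_range_succ, ih (fun k hk => hf k (hk.trans n.le_succ))]
    field_simp

-- slitPlane from ball
lemma slit_of_near_one {z : ℂ} (hz : ‖z - 1‖ < 1) : z ∈ Complex.slitPlane := by
  have := Complex.mem_slitPlane_of_norm_lt_one hz
  simpa using this

-- min is 1-lipschitz in second arg
lemma min_lip (t x y : ℝ) : |min t x - min t y| ≤ |x - y| := by
  rw [abs_le]
  constructor <;>
  · rcases le_total t x with h'|h' <;> rcases le_total t y with h''|h'' <;>
      rcases abs_cases (x - y) with ⟨he,_⟩|⟨he,_⟩ <;>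
      simp only [min_eq_left, min_eq_right, he, *] <;> linarith

lemma homLift {G : ℝ × ℝ → ℂ} (hGc : Continuous G) (hG0 : ∀ p, G p ≠ 0)
    (hGfac : ∀ p : ℝ × ℝ, G p = G (cl p.1, cl p.2)) :
    ∃ U : ℝ × ℝ → ℂ, ContinuousOn U (univ ×ˢ Icc 0 1) ∧ (∀ s, U (s, 0) = 0) ∧
      ∀ s : ℝ, ∀ t ∈ Icc (0:ℝ) 1, Complex.exp (U (s, t)) = G (s, t) / G (s, 0) := by
  classical
  set K : Set (ℝ × ℝ) := Icc 0 1 ×ˢ Icc 0 1 with hK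
  have hKc : IsCompact K := (isCompact_Icc).prod isCompact_Icc
  have hKne : K.Nonempty := ⟨(0,0), by constructor <;> exact ⟨le_refl _, zero_le_one⟩⟩
  obtain ⟨p₀, hp₀K, hp₀'⟩ := hKc.exists_isMinOn hKne (hGc.norm.continuousOn)
  have hp₀ : ∀ q ∈ K, ‖G p₀‖ ≤ ‖G q‖ := fun q hq => hp₀' hq
  set m : ℝ := ‖G p₀‖ with hm
  have hmpos : 0 < m := norm_pos_iff.mpr (hG0 p₀)
  have hlow : ∀ p : ℝ × ℝ, m ≤ ‖G p‖ := by
    intro p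
    rw [hGfac p]
    exact hp₀ _ ⟨cl_mem _, cl_mem _⟩
  have huc := hKc.uniformContinuousOn_of_continuous hGc.continuousOn
  rw [Metric.uniformContinuousOn_iff] at huc
  obtain ⟨δ, hδpos, hδ⟩ := huc m hmpos
  obtain ⟨n, hn⟩ := exists_nat_one_div_lt hδpos
  set N : ℕ := n + 1 with hNdef
  have hNpos : (0:ℝ) < N := by positivity
  have hNlt : (1:ℝ) / N < δ := by exact_mod_cast hn
  -- key ratio estimate
  have hratio : ∀ (s : ℝ) (a b : ℝ), a ∈ Icc (0:ℝ) 1 → b ∈ Icc (0:ℝ) 1 → |a - b| < δ →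
      ‖G (s, a) / G (s, b) - 1‖ < 1 := by
    intro s a b ha hb hab
    have hfa : G (s, a) = G (cl s, a) := by rw [hGfac (s, a)]; simp [cl_of_mem ha]
    have hfb : G (s, b) = G (cl s, b) := by rw [hGfac (s, b)]; simp [cl_of_mem hb]
    have hd : dist ((cl s, a) : ℝ × ℝ) (cl s, b) < δ := by
      rw [Prod.dist_eq]
      simp only [dist_self]
      rw [Real.dist_eq, max_eq_right (abs_nonneg _)]
      exact hab
    have hGd : dist (G (cl s, a)) (G (cl s, b)) < m :=
      hδ _ ⟨cl_mem _, ha⟩ _ ⟨cl_mem _, hb⟩ hd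
    have hb0 : G (s, b) ≠ 0 := hG0 _
    rw [div_sub_one hb0, norm_div, div_lt_one (norm_pos_iff.mpr hb0)]
    calc ‖G (s, a) - G (s, b)‖ = dist (G (cl s, a)) (G (cl s, b)) := by
          rw [hfa, hfb, dist_eq_norm]
      _ < m := hGd
      _ ≤ ‖G (s, b)‖ := hlow _ |>.trans_eq (by rw [hfb]) |>.trans_eq (by rw [← hfb])
    -- fallback
  -- node membership
  have hnode : ∀ (t : ℝ), t ∈ Icc (0:ℝ) 1 → ∀ k : ℕ, k ≤ N → min t ((k:ℝ)/N) ∈ Icc (0:ℝ) 1 := by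
    intro t ht k hk
    constructor
    · exact le_min ht.1 (by positivity)
    · exact (min_le_left _ _).trans ht.2
  have hgap : ∀ (t : ℝ) (k : ℕ), |min t (((k:ℕ)+1:ℝ)/N) - min t ((k:ℝ)/N)| < δ := by
    intro t k
    refine lt_of_le_of_lt (min_lip t _ _) ?_
    have : ((k:ℝ)+1)/N - (k:ℝ)/N = 1/N := by rw [← sub_div]; ring_nf
    rw [this]
    · rwa [_root_.abs_of_nonneg (by positivity)]
  -- ratio in ball for in-range points
  have hball : ∀ (s t : ℝ), t ∈ Icc (0:ℝ) 1 → ∀ k : ℕ, k < N →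
      ‖G (s, min t (((k:ℝ)+1)/N)) / G (s, min t ((k:ℝ)/N)) - 1‖ < 1 := by
    intro s t ht k hkN
    have h1 : min t (((k:ℝ)+1)/N) ∈ Icc (0:ℝ) 1 := by
      have := hnode t ht (k+1) (by omega)
      rwa [Nat.cast_add, Nat.cast_one] at this
    have h2 : min t ((k:ℝ)/N) ∈ Icc (0:ℝ) 1 := hnode t ht k hkN.le
    exact hratio s _ _ h1 h2 (hgap t k)
  set U : ℝ × ℝ → ℂ := fun p => ∑ k ∈ Finset.range N,
    Complex.log (G (p.1, min p.2 (((k:ℝ)+1)/N)) / G (p.1, min p.2 ((k:ℝ)/N))) with hU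
  refine ⟨U, ?_, ?_, ?_⟩
  · -- continuity
    apply continuousOn_finset_sum
    intro k hk
    rw [Finset.mem_range] at hk
    intro p hp
    rw [mem_prod] at hp
    have hRc : Continuous (fun q : ℝ × ℝ =>
        G (q.1, min q.2 (((k:ℝ)+1)/N)) / G (q.1, min q.2 ((k:ℝ)/N))) := by
      apply Continuous.div
      · exact hGc.comp (continuous_fst.prodMk (continuous_snd.min continuous_const))
      · exact hGc.comp (continuous_fst.prodMk (continuous_snd.min continuous_const))
      · exact fun q => hG0 _
    exact ContinuousWithinAt.clog hRc.continuousWithinAt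
      (slit_of_near_one (hball p.1 p.2 hp.2 k hk))
  · -- U (s, 0) = 0
    intro s
    rw [hU]
    simp only
    apply Finset.sum_eq_zero
    intro k hk
    have e1 : min (0:ℝ) (((k:ℝ)+1)/N) = 0 := min_eq_left (by positivity)
    have e2 : min (0:ℝ) ((k:ℝ)/N) = 0 := min_eq_left (by positivity)
    rw [e1, e2, div_self (hG0 _), Complex.log_one]
  · -- exp formula
    intro s t ht
    rw [hU]
    simp only
    rw [Complex.exp_sum]
    have : ∀ k ∈ Finset.range N, Complex.exp (Complex.log
        (G (s, min t (((k:ℝ)+1)/N)) / G (s, min t ((k:ℝ)/N))))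
        = G (s, min t (((k:ℝ)+1)/N)) / G (s, min t ((k:ℝ)/N)) := by
      intro k hk
      exact Complex.exp_log (div_ne_zero (hG0 _) (hG0 _))
    rw [Finset.prod_congr rfl this]
    have := prod_tel (fun k : ℕ => G (s, min t ((k:ℝ)/N))) N (fun k hk => hG0 _)
    simp only [Nat.cast_add, Nat.cast_one] at this
    rw [this]
    congr 2
    · rw [div_self (ne_of_gt hNpos), min_eq_left ht.2]
    · rw [Nat.cast_zero, zero_div, min_eq_right ht.1]

lemma keyLog {D : Set ℂ} (hD : IsOpen D) (hsc : SimplyConnectedSpace D) {g : ℂ → ℂ}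
    (hg : DifferentiableOn ℂ g D) (hg0 : ∀ z ∈ D, g z ≠ 0) :
    ∃ L : ℂ → ℂ, DifferentiableOn ℂ L D ∧ ∀ z ∈ D, Complex.exp (L z) = g z := by
  classical
  haveI := hsc
  haveI : PathConnectedSpace D := inferInstance
  haveI hne : Nonempty D := PathConnectedSpace.nonempty
  set x₀ : D := Classical.arbitrary D with hx₀
  have gc : ContinuousOn g D := hg.continuousOn
  have gX : Continuous (fun x : D => g x) := continuousOn_iff_continuous_restrict.mp gc
  set a₀ : ℂ := Complex.log (g x₀) with ha₀def
  have ha₀ : Complex.exp a₀ = g x₀ := Complex.exp_log (hg0 _ x₀.2)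
  -- the lift predicate
  set Lft : ∀ (x : D), ℂ → Prop := fun x w => ∃ q : Path x₀ x, ∃ u : ℝ → ℂ,
      ContinuousOn u (Icc 0 1) ∧ u 0 = a₀ ∧
      (∀ t ∈ Icc (0:ℝ) 1, Complex.exp (u t) = g (q.extend t)) ∧ u 1 = w with hLft
  -- existence of lifts along any path
  have hexq : ∀ (x : D) (q : Path x₀ x), ∃ u : ℝ → ℂ,
      ContinuousOn u (Icc 0 1) ∧ u 0 = a₀ ∧
      (∀ t ∈ Icc (0:ℝ) 1, Complex.exp (u t) = g (q.extend t)) := by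
    intro x q
    set G : ℝ × ℝ → ℂ := fun p => g (q.extend (cl p.2)) with hGdef
    have hGc : Continuous G :=
      gX.comp (q.continuous_extend.comp (cl_cont.comp continuous_snd))
    have hG0 : ∀ p, G p ≠ 0 := fun p => hg0 _ (q.extend (cl p.2)).2
    have hGfac : ∀ p : ℝ × ℝ, G p = G (cl p.1, cl p.2) := by
      intro p
      simp only [hGdef, cl_of_mem (cl_mem p.2)]
    obtain ⟨U, hUc, hU0, hUe⟩ := homLift hGc hG0 hGfac
    refine ⟨fun t => a₀ + U (0, t), ?_, ?_, ?_⟩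
    · have : ContinuousOn (fun t : ℝ => U (0, t)) (Icc 0 1) := by
        apply hUc.comp (continuous_const.prodMk continuous_id).continuousOn
        intro t ht
        exact ⟨trivial, ht⟩
      exact continuousOn_const.add this
    · show a₀ + U (0, 0) = a₀
      rw [hU0]; ring
    · intro t ht
      rw [Complex.exp_add, hUe 0 t ht, ha₀]
      have e0 : G (0, 0) = g x₀ := by
        simp only [hGdef, cl_of_mem (left_mem_Icc.mpr zero_le_one), Path.extend_zero]
      have et : G (0, t) = g (q.extend t) := by
        simp only [hGdef, cl_of_mem ht]
      rw [e0, et, mul_div_cancel₀]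
      exact hg0 _ x₀.2
  have hex : ∀ x : D, ∃ w, Lft x w := by
    intro x
    obtain ⟨u, hc, h0, he⟩ := hexq x (PathConnectedSpace.somePath x₀ x)
    exact ⟨u 1, PathConnectedSpace.somePath x₀ x, u, hc, h0, he, rfl⟩
  -- projIcc and cl
  have hπcl : ∀ t : ℝ, Set.projIcc (0:ℝ) 1 zero_le_one (cl t) = Set.projIcc (0:ℝ) 1 zero_le_one t := by
    intro t
    apply Subtype.ext
    show max 0 (min 1 (cl t)) = max 0 (min 1 t)
    exact cl_of_mem (cl_mem t)
  have hπ0 : Set.projIcc (0:ℝ) 1 zero_le_one 0 = 0 := by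
    apply Subtype.ext
    show max 0 (min 1 0) = 0
    norm_num
  have hπ1 : Set.projIcc (0:ℝ) 1 zero_le_one 1 = 1 := by
    apply Subtype.ext
    show max 0 (min 1 1) = 1
    norm_num
  have hext : ∀ (y : D) (p : Path x₀ y) (t : ℝ),
      p.extend t = p (Set.projIcc 0 1 zero_le_one t) := fun _ _ _ => rfl
  -- uniqueness of lift values
  have huni : ∀ (x : D) (w₁ w₂ : ℂ), Lft x w₁ → Lft x w₂ → w₁ = w₂ := by
    rintro x w₁ w₂ ⟨q₁, u₁, hu₁c, hu₁0, hu₁e, hu₁1⟩ ⟨q₂, u₂, hu₂c, hu₂0, hu₂e, hu₂1⟩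
    obtain ⟨H⟩ := SimplyConnectedSpace.paths_homotopic q₁ q₂
    set G : ℝ × ℝ → ℂ :=
      fun p => g (H (Set.projIcc 0 1 zero_le_one p.1, Set.projIcc 0 1 zero_le_one p.2)) with hGdef
    have hGc : Continuous G := by
      apply gX.comp
      exact H.continuous.comp ((continuous_projIcc.comp continuous_fst).prodMk
        (continuous_projIcc.comp continuous_snd))
    have hG0 : ∀ p, G p ≠ 0 := fun p => hg0 _ (H _).2
    have hGfac : ∀ p : ℝ × ℝ, G p = G (cl p.1, cl p.2) := by
      intro p; simp only [hGdef, hπcl]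
    obtain ⟨U, hUc, hU0, hUe⟩ := homLift hGc hG0 hGfac
    have hGs0 : ∀ s : ℝ, G (s, 0) = g x₀ := by
      intro s
      have h1 : H (Set.projIcc 0 1 zero_le_one s, (0:unitInterval)) = x₀ :=
        H.source (Set.projIcc 0 1 zero_le_one s)
      simp only [hGdef, hπ0, h1]
    have hGs1 : ∀ s : ℝ, G (s, 1) = g x := by
      intro s
      have h1 : H (Set.projIcc 0 1 zero_le_one s, (1:unitInterval)) = x :=
        H.target (Set.projIcc 0 1 zero_le_one s)
      simp only [hGdef, hπ1, h1]
    have hvc : ∀ s : ℝ, ContinuousOn (fun t : ℝ => a₀ + U (s, t)) (Icc 0 1) := by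
      intro s
      refine continuousOn_const.add (hUc.comp (continuous_const.prodMk continuous_id).continuousOn ?_)
      intro t ht; exact ⟨trivial, ht⟩
    have hvexp : ∀ s : ℝ, ∀ t ∈ Icc (0:ℝ) 1, Complex.exp (a₀ + U (s, t)) = G (s, t) := by
      intro s t ht
      rw [Complex.exp_add, hUe s t ht, ha₀, hGs0, mul_div_cancel₀]
      exact hg0 _ x₀.2
    have hv₁ : u₁ 1 = a₀ + U (0, 1) := by
      apply lift_unique hu₁c (hvc 0)
      · intro t ht
        rw [hvexp 0 t ht, hu₁e t ht]
        have hH0 : H ((0:unitInterval), Set.projIcc 0 1 zero_le_one t) =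
            q₁ (Set.projIcc 0 1 zero_le_one t) := H.apply_zero _
        rw [hGdef]
        simp only [hπ0, hH0]
        rw [hext _ q₁ t]
      · rw [hu₁0]
        show a₀ = a₀ + U (0, 0)
        rw [hU0]; ring
    have hv₂ : u₂ 1 = a₀ + U (1, 1) := by
      apply lift_unique hu₂c (hvc 1)
      · intro t ht
        rw [hvexp 1 t ht, hu₂e t ht]
        have hH1 : H ((1:unitInterval), Set.projIcc 0 1 zero_le_one t) =
            q₂ (Set.projIcc 0 1 zero_le_one t) := H.apply_one _
        rw [hGdef]
        simp only [hπ1, hH1]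
        rw [hext _ q₂ t]
      · rw [hu₂0]
        show a₀ = a₀ + U (1, 0)
        rw [hU0]; ring
    have hecont : ContinuousOn (fun s : ℝ => a₀ + U (s, 1)) (Icc 0 1) := by
      refine continuousOn_const.add (hUc.comp (continuous_id.prodMk continuous_const).continuousOn ?_)
      intro s hs; exact ⟨trivial, right_mem_Icc.mpr zero_le_one⟩
    have hval : ∀ s : ℝ, Complex.exp (a₀ + U (s, 1)) = g x := by
      intro s
      rw [hvexp s 1 (right_mem_Icc.mpr zero_le_one), hGs1]
    have hee : (fun s : ℝ => a₀ + U (s, 1)) 1 = (fun _ : ℝ => a₀ + U (0, 1)) 1 := by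
      apply lift_unique hecont continuousOn_const
      · intro t ht
        rw [hval t, hval 0]
      · rfl
    simp only at hee
    rw [← hu₁1, ← hu₂1, hv₁, hv₂, hee]
  -- define L by choice
  have hcl0 : cl 0 = 0 := cl_of_mem ⟨le_refl _, zero_le_one⟩
  have hcl1 : cl 1 = 1 := cl_of_mem ⟨zero_le_one, le_refl _⟩
  set L : ℂ → ℂ := fun z => if hz : z ∈ D then (hex ⟨z, hz⟩).choose else 0 with hLdef
  have hL : ∀ z (hz : z ∈ D), Lft ⟨z, hz⟩ (L z) := by
    intro z hz
    simp only [hLdef, dif_pos hz]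
    exact (hex ⟨z, hz⟩).choose_spec
  have hLuniq : ∀ z (hz : z ∈ D) (w : ℂ), Lft ⟨z, hz⟩ w → L z = w :=
    fun z hz w hw => huni _ _ _ (hL z hz) hw
  have hexp : ∀ z ∈ D, Complex.exp (L z) = g z := by
    intro z hz
    obtain ⟨q, u, hc, h0, he, h1⟩ := hL z hz
    rw [← h1, he 1 (right_mem_Icc.mpr zero_le_one), Path.extend_one]
  -- local formula
  have hloc : ∀ z₀ (hz₀ : z₀ ∈ D), ∃ r > 0, Metric.ball z₀ r ⊆ D ∧
      ∀ z ∈ Metric.ball z₀ r, L z = L z₀ + Complex.log (g z / g z₀) := by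
    intro z₀ hz₀
    have hg0' := hg0 z₀ hz₀
    have hca : ContinuousAt g z₀ := gc.continuousAt (hD.mem_nhds hz₀)
    rw [Metric.continuousAt_iff] at hca
    obtain ⟨δ₁, hδ₁pos, hδ₁⟩ := hca ‖g z₀‖ (norm_pos_iff.mpr hg0')
    obtain ⟨δ₂, hδ₂pos, hδ₂⟩ := Metric.isOpen_iff.mp hD z₀ hz₀
    set r : ℝ := min δ₁ δ₂ with hrdef
    have hrD : Metric.ball z₀ r ⊆ D := (Metric.ball_subset_ball (min_le_right _ _)).trans hδ₂
    refine ⟨r, lt_min hδ₁pos hδ₂pos, hrD, ?_⟩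
    intro z hzball
    have hzD : z ∈ D := hrD hzball
    -- nearness : for points in the ball the ratio with g z₀ is close to 1
    have hnear : ∀ w ∈ Metric.ball z₀ r, ‖g w / g z₀ - 1‖ < 1 := by
      intro w hw
      have hd : dist w z₀ < δ₁ := lt_of_lt_of_le hw (min_le_left _ _)
      have := hδ₁ hd
      rw [div_sub_one hg0', norm_div, div_lt_one (norm_pos_iff.mpr hg0')]
      rwa [dist_eq_norm] at this
    -- the segment
    set γ : ℝ → ℂ := fun τ => z₀ + ((cl τ : ℝ) : ℂ) * (z - z₀) with hγdef
    have hγball : ∀ τ : ℝ, γ τ ∈ Metric.ball z₀ r := by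
      intro τ
      rw [Metric.mem_ball, dist_eq_norm]
      have h1 : γ τ - z₀ = ((cl τ : ℝ) : ℂ) * (z - z₀) := by rw [hγdef]; ring
      rw [h1, norm_mul, Complex.norm_real, Real.norm_eq_abs,
        _root_.abs_of_nonneg (cl_mem τ).1]
      calc cl τ * ‖z - z₀‖ ≤ 1 * ‖z - z₀‖ := by
            apply mul_le_mul_of_nonneg_right (cl_mem τ).2 (norm_nonneg _)
        _ = ‖z - z₀‖ := one_mul _
        _ < r := by rw [← dist_eq_norm]; exact hzball
    have hγD : ∀ τ : ℝ, γ τ ∈ D := fun τ => hrD (hγball τ)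
    have hγcont : Continuous γ := by
      apply continuous_const.add
      exact (Complex.continuous_ofReal.comp cl_cont).mul continuous_const
    have hγ0 : γ 0 = z₀ := by rw [hγdef]; simp [hcl0]
    have hγ1 : γ 1 = z := by rw [hγdef]; simp [hcl1]
    set seg : Path (⟨z₀, hz₀⟩ : D) ⟨z, hzD⟩ :=
      { toFun := fun τ => ⟨γ (τ : ℝ), hγD _⟩
        continuous_toFun := by
          apply Continuous.subtype_mk
          exact hγcont.comp continuous_subtype_val
        source' := by apply Subtype.ext; exact hγ0
        target' := by apply Subtype.ext; exact hγ1 } with hsegdef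
    obtain ⟨q₀, u₀, hu₀c, hu₀0, hu₀e, hu₀1⟩ := hL z₀ hz₀
    set q : Path x₀ (⟨z, hzD⟩ : D) := q₀.trans seg with hqdef
    set u : ℝ → ℂ := fun t => if t ≤ 1/2 then u₀ (cl (2*t))
      else u₀ 1 + Complex.log (g (γ (2*t - 1)) / g z₀) with hudef
    have hc₁ : Continuous fun t : ℝ => u₀ (cl (2*t)) := by
      apply hu₀c.comp_continuous (cl_cont.comp (continuous_const.mul continuous_id))
      exact fun t => cl_mem _
    have hc₂ : Continuous fun t : ℝ => u₀ 1 + Complex.log (g (γ (2*t - 1)) / g z₀) := by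
      apply continuous_const.add
      rw [continuous_iff_continuousAt]
      intro t
      apply ContinuousAt.clog
      · apply ContinuousAt.div_const
        have : Continuous fun t : ℝ => g (γ (2*t - 1)) := by
          have : Continuous fun t : ℝ => (⟨γ (2*t-1), hγD _⟩ : D) := by
            apply Continuous.subtype_mk
            exact hγcont.comp ((continuous_const.mul continuous_id).sub continuous_const)
          exact gX.comp this
        exact this.continuousAt
      · exact slit_of_near_one (hnear _ (hγball _))
    have hucont : Continuous u := by
      rw [hudef]
      apply Continuous.if_le hc₁ hc₂ continuous_id continuous_const
      intro t ht
      have ht' : t = 1/2 := ht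
      subst ht'
      norm_num [hcl1, hγ0, div_self hg0', Complex.log_one]
    have hu0 : u 0 = a₀ := by
      rw [hudef]
      norm_num [hcl0, hu₀0]
    have huexp : ∀ t ∈ Icc (0:ℝ) 1, Complex.exp (u t) = g (q.extend t) := by
      intro t ht
      rw [Path.extend_apply q ht, hqdef, Path.trans_apply]
      rw [hudef]
      simp only
      split_ifs with h
      · have h2t : 2*t ∈ Icc (0:ℝ) 1 := ⟨by linarith [ht.1], by linarith⟩
        rw [cl_of_mem h2t]
        have := hu₀e (2*t) h2t
        rw [this, Path.extend_apply q₀ h2t]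
      · have h2t : 2*t - 1 ∈ Icc (0:ℝ) 1 := ⟨by linarith, by linarith [ht.2]⟩
        rw [Complex.exp_add]
        have he1 : Complex.exp (u₀ 1) = g z₀ := by
          rw [hu₀e 1 (right_mem_Icc.mpr zero_le_one), Path.extend_one]
        rw [he1, Complex.exp_log (div_ne_zero (hg0 _ (hγD _)) hg0'),
          mul_div_cancel₀ _ hg0']
        rfl
    have hLz : L z = u 1 := by
      apply hLuniq z hzD
      exact ⟨q, u, hucont.continuousOn, hu0, huexp, rfl⟩
    rw [hLz, hudef]
    simp only
    rw [if_neg (by norm_num)]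
    have : (2:ℝ)*1 - 1 = 1 := by norm_num
    rw [this, hγ1, hu₀1]
  -- conclude
  refine ⟨L, ?_, hexp⟩
  intro z₀ hz₀
  obtain ⟨r, hrpos, hrD, hr⟩ := hloc z₀ hz₀
  have hdiff : DifferentiableAt ℂ (fun z => L z₀ + Complex.log (g z / g z₀)) z₀ := by
    apply DifferentiableAt.const_add
    apply DifferentiableAt.clog
    · exact (hg.differentiableAt (hD.mem_nhds hz₀)).div_const _
    · rw [div_self (hg0 z₀ hz₀)]
      exact Complex.one_mem_slitPlane
  have heq : L =ᶠ[nhds z₀] fun z => L z₀ + Complex.log (g z / g z₀) := by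
    filter_upwards [Metric.ball_mem_nhds z₀ hrpos] with w hw using hr w hw
  exact (hdiff.congr_of_eventuallyEq heq).differentiableWithinAt

lemma pointAlg (p1 p2 p3 p4 a b c : ℂ) (ha : Complex.exp a = p1 + Complex.I*p2)
    (hb : Complex.exp b = p1 - Complex.I*p2) (hc : Complex.exp c = p3 + Complex.I*p4)
    (hsum : p1^2+p2^2+p3^2+p4^2 = 0) :
    p1 = Complex.exp ((a+b)/2) * Complex.cos ((a-b)/(2*Complex.I)) ∧
    p2 = Complex.exp ((a+b)/2) * Complex.sin ((a-b)/(2*Complex.I)) ∧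
    p3 = Complex.I * Complex.exp ((a+b)/2) *
      Complex.cos (-Complex.I*(c - (a+b)/2 - Complex.log Complex.I)) ∧
    p4 = Complex.I * Complex.exp ((a+b)/2) *
      Complex.sin (-Complex.I*(c - (a+b)/2 - Complex.log Complex.I)) := by
  set X := Complex.exp ((a+b)/2) with hXdef
  set C := Complex.exp c with hCdef
  have hX0 : X ≠ 0 := Complex.exp_ne_zero _
  have hC0 : C ≠ 0 := Complex.exp_ne_zero _
  set z₁ := (a-b)/(2*Complex.I) with hz₁def
  set z₂ := -Complex.I*(c - (a+b)/2 - Complex.log Complex.I) with hz₂def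
  have hz₁I : z₁ * Complex.I = (a-b)/2 := by
    rw [hz₁def]
    field_simp
  have hz₂I : z₂ * Complex.I = c - (a+b)/2 - Complex.log Complex.I := by
    rw [hz₂def]
    linear_combination (-(c - (a+b)/2 - Complex.log Complex.I)) * Complex.I_sq
  have hlogI : Complex.exp (Complex.log Complex.I) = Complex.I :=
    Complex.exp_log Complex.I_ne_zero
  have hG1 : X * Complex.exp (z₁ * Complex.I) = p1 + Complex.I*p2 := by
    rw [hz₁I, ← Complex.exp_add, ← ha]
    congr 1
    ring
  have hG2 : X * Complex.exp (-(z₁ * Complex.I)) = p1 - Complex.I*p2 := by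
    rw [hz₁I, ← Complex.exp_add, ← hb]
    congr 1
    ring
  have hXX : X * X = p1^2 + p2^2 := by
    have h0 : X * X = (p1 + Complex.I*p2) * (p1 - Complex.I*p2) := by
      rw [hXdef, ← Complex.exp_add, ← ha, ← hb, ← Complex.exp_add]
      congr 1
      ring
    linear_combination h0 - p2^2 * Complex.I_sq
  have hE1 : Complex.exp (z₂ * Complex.I) = C / (X * Complex.I) := by
    rw [hz₂I, Complex.exp_sub, Complex.exp_sub, hlogI, ← hXdef, ← hCdef, div_div]
  have hE2 : Complex.exp (-(z₂ * Complex.I)) = X * Complex.I / C := by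
    rw [Complex.exp_neg, hE1, inv_div]
  have key : (p3 - Complex.I*p4) * C = -(X*X) := by
    linear_combination (p3 - Complex.I*p4) * hc + hXX + hsum - p4^2 * Complex.I_sq
  have hF1 : Complex.I * X * Complex.exp (z₂ * Complex.I) = p3 + Complex.I*p4 := by
    rw [hE1, ← hc]
    field_simp
  have hF2 : Complex.I * X * Complex.exp (-(z₂ * Complex.I)) = p3 - Complex.I*p4 := by
    rw [hE2]
    field_simp
    linear_combination (-1 : ℂ) * key + (X*X) * Complex.I_sq
  refine ⟨?_, ?_, ?_, ?_⟩
  · simp only [Complex.cos]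
    rw [neg_mul]
    linear_combination (-hG1 - hG2)/2
  · simp only [Complex.sin]
    rw [neg_mul]
    linear_combination (Complex.I/2)*hG1 - (Complex.I/2)*hG2 + p2*Complex.I_sq
  · simp only [Complex.cos]
    rw [neg_mul]
    linear_combination (-hF1 - hF2)/2
  · simp only [Complex.sin]
    rw [neg_mul]
    linear_combination (Complex.I/2)*hF1 - (Complex.I/2)*hF2 + p4*Complex.I_sq


/-- STATEMENT 6 (trigonometric Weierstrass representation): if `D ⊆ ℂ` is a simply
connected open set and `Φ = (φ₁,φ₂,φ₃,φ₄) : D → ℂ⁴` is holomorphic with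
`φ₁² + φ₂² + φ₃² + φ₄² = 0` and `φ₁² + φ₂²` nonvanishing on `D`, then there exist
holomorphic `f, h₁, h₂ : D → ℂ` with `f` nonvanishing such that
`φ₁ = f cos h₁`, `φ₂ = f sin h₁`, `φ₃ = i f cos h₂`, `φ₄ = i f sin h₂` on `D`. -/
theorem stmt6 (D : Set ℂ) (hD : IsOpen D) (hsc : SimplyConnectedSpace D)
    (φ₁ φ₂ φ₃ φ₄ : ℂ → ℂ)
    (h1 : DifferentiableOn ℂ φ₁ D) (h2 : DifferentiableOn ℂ φ₂ D)
    (h3 : DifferentiableOn ℂ φ₃ D) (h4 : DifferentiableOn ℂ φ₄ D)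
    (hsum : ∀ t ∈ D, φ₁ t ^ 2 + φ₂ t ^ 2 + φ₃ t ^ 2 + φ₄ t ^ 2 = 0)
    (h12 : ∀ t ∈ D, φ₁ t ^ 2 + φ₂ t ^ 2 ≠ 0) :
    ∃ f h₁ h₂ : ℂ → ℂ,
      DifferentiableOn ℂ f D ∧ DifferentiableOn ℂ h₁ D ∧ DifferentiableOn ℂ h₂ D ∧
      (∀ t ∈ D, f t ≠ 0) ∧
      (∀ t ∈ D,
        φ₁ t = f t * Complex.cos (h₁ t) ∧
        φ₂ t = f t * Complex.sin (h₁ t) ∧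
        φ₃ t = Complex.I * f t * Complex.cos (h₂ t) ∧
        φ₄ t = Complex.I * f t * Complex.sin (h₂ t)) := by
  have hw12 : ∀ t ∈ D, (φ₁ t + Complex.I * φ₂ t) * (φ₁ t - Complex.I * φ₂ t)
      = φ₁ t ^ 2 + φ₂ t ^ 2 := by
    intro t ht
    linear_combination (-(φ₂ t)^2) * Complex.I_sq
  have hw34 : ∀ t ∈ D, (φ₃ t + Complex.I * φ₄ t) * (φ₃ t - Complex.I * φ₄ t)
      = φ₃ t ^ 2 + φ₄ t ^ 2 := by
    intro t ht
    linear_combination (-(φ₄ t)^2) * Complex.I_sq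
  have hne1 : ∀ t ∈ D, φ₁ t + Complex.I * φ₂ t ≠ 0 := by
    intro t ht
    have := h12 t ht
    rw [← hw12 t ht] at this
    exact (mul_ne_zero_iff.mp this).1
  have hne2 : ∀ t ∈ D, φ₁ t - Complex.I * φ₂ t ≠ 0 := by
    intro t ht
    have := h12 t ht
    rw [← hw12 t ht] at this
    exact (mul_ne_zero_iff.mp this).2
  have hne3 : ∀ t ∈ D, φ₃ t + Complex.I * φ₄ t ≠ 0 := by
    intro t ht
    have h34 : φ₃ t ^ 2 + φ₄ t ^ 2 = -(φ₁ t ^ 2 + φ₂ t ^ 2) := by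
      linear_combination hsum t ht
    have : (φ₃ t + Complex.I * φ₄ t) * (φ₃ t - Complex.I * φ₄ t) ≠ 0 := by
      rw [hw34 t ht, h34]
      exact neg_ne_zero.mpr (h12 t ht)
    exact (mul_ne_zero_iff.mp this).1
  obtain ⟨L₁, hL₁d, hL₁⟩ := keyLog hD hsc (h1.add (h2.const_mul Complex.I)) hne1
  obtain ⟨L₂, hL₂d, hL₂⟩ := keyLog hD hsc (h1.sub (h2.const_mul Complex.I)) hne2
  obtain ⟨L₃, hL₃d, hL₃⟩ := keyLog hD hsc (h3.add (h4.const_mul Complex.I)) hne3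
  refine ⟨fun t => Complex.exp ((L₁ t + L₂ t)/2),
    fun t => (L₁ t - L₂ t)/(2*Complex.I),
    fun t => -Complex.I * (L₃ t - (L₁ t + L₂ t)/2 - Complex.log Complex.I),
    ((hL₁d.add hL₂d).div_const 2).cexp,
    (hL₁d.sub hL₂d).div_const _,
    (((hL₃d.sub ((hL₁d.add hL₂d).div_const 2)).sub_const _).const_mul _),
    fun t ht => Complex.exp_ne_zero _, ?_⟩
  intro t ht
  exact pointAlg (φ₁ t) (φ₂ t) (φ₃ t) (φ₄ t) (L₁ t) (L₂ t) (L₃ t)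
    (hL₁ t ht) (hL₂ t ht) (hL₃ t ht) (hsum t ht)
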